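/- Let W(v_c; v_1,...,v_n) be a wheel embedded in ℝ² with p_i, p_{i+1}, p_c non-collinear for all i (cyclic indices). Then the space of equilibrium stresses on this embedding of the wheel is one-dimensional: every equilibrium stress is a scalar multiple of the atomic stress ω^a given by ω^a_{i,i+1} = −1/[p_i p_{i+1} p_c] and ω^a_{i,c} = [p_{i−1} p_i p_{i+1}]/([p_{i−1} p_i p_c][p_i p_{i+1} p_c]). -/

import Mathlib

open Finset

/-- `[p q r]`: twice the signed area of the triangle `p q r` in `ℝ²`. -/
def br2 (p q r : Fin 2 → ℝ) : ℝ :=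
  (q 0 - p 0) * (r 1 - p 1) - (q 1 - p 1) * (r 0 - p 0)

lemma key_aux (a b c q : Fin 2 → ℝ) (sa sb tb : ℝ)
    (h : tb • (q - b) + sa • (a - b) + sb • (c - b) = 0) :
    sa * br2 a b q = sb * br2 b c q ∧
      tb * br2 b c q = - (sa * br2 a b c) := by
  have e0 := congrFun h 0
  have e1 := congrFun h 1
  simp only [Pi.add_apply, Pi.smul_apply, Pi.sub_apply, Pi.zero_apply,
    smul_eq_mul] at e0 e1
  constructor
  · simp only [br2]
    linear_combination (-(q 1 - b 1)) * e0 + (q 0 - b 0) * e1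
  · simp only [br2]
    linear_combination (-(c 1 - b 1)) * e0 + (c 0 - b 0) * e1

/-- For a wheel `W(v_c; v_1 … v_n)` embedded in `ℝ²` with all
triangles `(p_i, p_{i+1}, p_c)` nondegenerate, the space of equilibrium
stresses is one-dimensional: every stress `(s, t)` (with `s i` on the cycle
edge `(i, i+1)` and `t i` on the spoke `(i, c)`) satisfying the equilibrium
conditions at the center and at every base vertex is a scalar multiple `μ` of
the atomic stress `ω^a_{i,i+1} = -1/[p_i p_{i+1} p_c]`,
`ω^a_{i,c} = [p_{i-1} p_i p_{i+1}]/([p_{i-1} p_i p_c][p_i p_{i+1} p_c])`. -/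
theorem stmt6
    (n : ℕ) [NeZero n] (hn : 3 ≤ n)
    (p : ZMod n → Fin 2 → ℝ) (pc : Fin 2 → ℝ)
    (hnd : ∀ i : ZMod n, br2 (p i) (p (i + 1)) pc ≠ 0)
    (s t : ZMod n → ℝ)
    (hcenter : ∑ i : ZMod n, t i • (p i - pc) = 0)
    (hbase : ∀ i : ZMod n,
      t i • (pc - p i) + s (i - 1) • (p (i - 1) - p i) +
        s i • (p (i + 1) - p i) = 0) :
    ∃ μ : ℝ,
      (∀ i : ZMod n, s i = μ * (-1 / br2 (p i) (p (i + 1)) pc)) ∧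
      (∀ i : ZMod n, t i = μ * (br2 (p (i - 1)) (p i) (p (i + 1)) /
        (br2 (p (i - 1)) (p i) pc * br2 (p i) (p (i + 1)) pc))) := by
  set F : ZMod n → ℝ := fun i => s i * br2 (p i) (p (i + 1)) pc with hF
  have hkey := fun i => key_aux (p (i - 1)) (p i) (p (i + 1)) pc
    (s (i - 1)) (s i) (t i) (hbase i)
  have hstep : ∀ i : ZMod n, F (i - 1) = F i := by
    intro i
    have h1 := (hkey i).1
    simpa [hF, sub_add_cancel] using h1
  have hconst : ∀ i : ZMod n, F i = F 0 := by
    have hnat : ∀ k : ℕ, F (k : ZMod n) = F 0 := by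
      intro k
      induction k with
      | zero => simp
      | succ m ih =>
        have := hstep ((m + 1 : ℕ) : ZMod n)
        push_cast at this ⊢
        rw [add_sub_cancel_right] at this
        rw [← this, ih]
    intro i
    obtain ⟨k, rfl⟩ := ZMod.natCast_zmod_surjective (n := n) i
    exact hnat k
  refine ⟨- F 0, ?_, ?_⟩
  · intro i
    have h := hconst i
    have hne := hnd i
    simp only [hF, zero_add] at h ⊢
    field_simp
    linarith [h]
  · intro i
    have h2 := (hkey i).2
    have hne1 : br2 (p (i - 1)) (p i) pc ≠ 0 := by
      have := hnd (i - 1); rwa [sub_add_cancel] at this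
    have hs : s (i - 1) = F 0 / br2 (p (i - 1)) (p i) pc := by
      have h := hconst (i - 1)
      simp only [hF, sub_add_cancel, zero_add] at h
      simp only [hF, zero_add]
      field_simp
      linarith [h]
    rw [hs] at h2
    have hne2 := hnd i
    field_simp at h2 ⊢
    linarith [h2]
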